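/- Fix an integer n ≥ 1. Let ψ be the C-algebra homomorphism from the polynomial ring C[s, X_1, …, X_{n+3}] onto the quotient ring C[s, X_1, X_2, X_{n+3}]/(s X_1 X_2 − (X_1 + X_2)) that fixes s, X_1, X_2, sends X_{n+3} to (the class of) X_{n+3}, and sends X_{k} to (the class of) s^{n+3−k} X_{n+3} for k = 3, …, n+2. Then the kernel of ψ is exactly the ideal generated by the 2×2 minors of the 2×(n+2) matrix whose columns are (s, 1), (X_1 + X_2, X_1 X_2), and (X_{k+2}, X_{k+3}) for k = 1, …, n. -/

import Mathlib

open MvPolynomial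

/-- The hypersurface ring `C[s, X_1, X_2, X_{n+3}]/(s X_1 X_2 − (X_1 + X_2))`, with
variables `s, X_1, X_2, X_{n+3}` indexed as `X 0, X 1, X 2, X 3`. -/
noncomputable abbrev chartRing1 : Type :=
  MvPolynomial (Fin 4) ℂ ⧸
    Ideal.span {(X 0 * X 1 * X 2 - (X 1 + X 2) : MvPolynomial (Fin 4) ℂ)}

/-- The map `C[s, X_1, …, X_{n+3}] → C[s,X_1,X_2,X_{n+3}]/(sX_1X_2 − (X_1+X_2))`
fixing `s, X_1, X_2`, sending `X_{n+3} ↦ X_{n+3}` and `X_k ↦ s^{n+3−k} X_{n+3}` for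
`k = 3, …, n+2`. The source variables are indexed by `Fin (n+4)` with `s = X 0`
and `X_j = X j`; in the target `s, X_1, X_2, X_{n+3}` are `X 0, X 1, X 2, X 3`. -/
noncomputable def chartHom1 (n : ℕ) :
    MvPolynomial (Fin (n + 4)) ℂ →ₐ[ℂ] chartRing1 :=
  aeval fun i : Fin (n + 4) =>
    if h : (i : ℕ) ≤ 2 then Ideal.Quotient.mk _ (X ⟨(i : ℕ), by omega⟩)
    else if (i : ℕ) = n + 3 then Ideal.Quotient.mk _ (X 3)
    else Ideal.Quotient.mk _ (X 0 ^ (n + 3 - (i : ℕ)) * X 3)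

/-- First row `(s, X_1 + X_2, X_3, X_4, …, X_{n+2})` of the matrix. -/
noncomputable def ch1Row1 (n : ℕ) : Fin (n + 2) → MvPolynomial (Fin (n + 4)) ℂ := fun k =>
  if (k : ℕ) = 0 then X 0
  else if (k : ℕ) = 1 then X 1 + X 2
  else X ⟨(k : ℕ) + 1, by omega⟩

/-- Second row `(1, X_1 X_2, X_4, X_5, …, X_{n+3})` of the matrix. -/
noncomputable def ch1Row2 (n : ℕ) : Fin (n + 2) → MvPolynomial (Fin (n + 4)) ℂ := fun k =>
  if (k : ℕ) = 0 then 1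
  else if (k : ℕ) = 1 then X 1 * X 2
  else X ⟨(k : ℕ) + 2, by omega⟩

/-! ### Auxiliary definitions -/

def emb1 (n : ℕ) : Fin 4 → Fin (n + 4) := ![0, 1, 2, ⟨n + 3, by omega⟩]

noncomputable def theta1 (n : ℕ) : MvPolynomial (Fin (n + 4)) ℂ →ₐ[ℂ] MvPolynomial (Fin 4) ℂ :=
  aeval fun i : Fin (n + 4) =>
    if h : (i : ℕ) ≤ 2 then X ⟨(i : ℕ), by omega⟩
    else if (i : ℕ) = n + 3 then X 3
    else X 0 ^ (n + 3 - (i : ℕ)) * X 3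

/-- the ideal of 2×2 minors -/
noncomputable def minId (n : ℕ) : Ideal (MvPolynomial (Fin (n + 4)) ℂ) :=
  Ideal.span {m | ∃ i j : Fin (n + 2),
    m = ch1Row1 n i * ch1Row2 n j - ch1Row1 n j * ch1Row2 n i}

lemma minor_mem (n : ℕ) (i j : Fin (n + 2)) :
    ch1Row1 n i * ch1Row2 n j - ch1Row1 n j * ch1Row2 n i ∈ minId n :=
  Ideal.subset_span ⟨i, j, rfl⟩

lemma chartHom1_eq (n : ℕ) :
    chartHom1 n = (Ideal.Quotient.mkₐ ℂ _).comp (theta1 n) := by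
  rw [theta1, comp_aeval, chartHom1]
  congr 1
  funext i
  split_ifs with h1 h2 <;> simp

lemma chartHom1_rename (n : ℕ) (g : MvPolynomial (Fin 4) ℂ) :
    chartHom1 n (rename (emb1 n) g) = Ideal.Quotient.mk _ g := by
  rw [chartHom1, aeval_rename]
  have : ((fun i : Fin (n + 4) =>
      if h : (i : ℕ) ≤ 2 then Ideal.Quotient.mk (Ideal.span {(X 0 * X 1 * X 2 - (X 1 + X 2) : MvPolynomial (Fin 4) ℂ)}) (X ⟨(i : ℕ), by omega⟩)
      else if (i : ℕ) = n + 3 then Ideal.Quotient.mk _ (X 3)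
      else Ideal.Quotient.mk _ (X 0 ^ (n + 3 - (i : ℕ)) * X 3)) ∘ emb1 n)
      = ⇑(Ideal.Quotient.mkₐ ℂ (Ideal.span {(X 0 * X 1 * X 2 - (X 1 + X 2) : MvPolynomial (Fin 4) ℂ)})) ∘ X := by
    funext k
    fin_cases k <;> simp [emb1, Fin.val_two, Nat.mod_eq_of_lt (show 2 < n + 4 by omega)]
  rw [this, ← aeval_unique]
  simp

/-- substitution lemma -/
lemma sub_aeval_mem {m : ℕ} (σ : Fin m → MvPolynomial (Fin m) ℂ)
    (I : Ideal (MvPolynomial (Fin m) ℂ)) (hI : ∀ i, X i - σ i ∈ I)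
    (f : MvPolynomial (Fin m) ℂ) : f - aeval σ f ∈ I := by
  induction f using MvPolynomial.induction_on with
  | C a => simp
  | add p q hp hq =>
      have : p + q - aeval σ (p + q) = (p - aeval σ p) + (q - aeval σ q) := by
        rw [map_add]; ring
      rw [this]; exact I.add_mem hp hq
  | mul_X p i hp =>
      have : p * X i - aeval σ (p * X i)
          = (p - aeval σ p) * X i + aeval σ p * (X i - σ i) := by
        rw [map_mul, aeval_X]; ring
      rw [this]
      exact I.add_mem (I.mul_mem_right _ hp) (I.mul_mem_left _ (hI i))

/-- `X_j - s X_{j+1} ∈ minId` for `3 ≤ j ≤ n+2`. -/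
lemma step_mem (n : ℕ) (j : ℕ) (h3 : 3 ≤ j) (hj : j ≤ n + 2) :
    (X ⟨j, by omega⟩ - X 0 * X ⟨j + 1, by omega⟩ : MvPolynomial (Fin (n + 4)) ℂ) ∈ minId n := by
  have hm := minor_mem n ⟨j - 1, by omega⟩ ⟨0, by omega⟩
  have h0 : (j : ℕ) - 1 ≠ 0 := by omega
  have h1 : (j : ℕ) - 1 ≠ 1 := by omega
  simp only [ch1Row1, ch1Row2] at hm
  norm_num [h0, h1] at hm
  simp only [show j - 1 + 1 = j from by omega, show j - 1 + 2 = j + 1 from by omega] at hm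
  exact hm

/-- `X_j - s^{n+3-j} X_{n+3} ∈ minId` for `3 ≤ j ≤ n+2`. -/
lemma chain_mem (n : ℕ) : ∀ (d j : ℕ) (h3 : 3 ≤ j) (hj : j ≤ n + 2), n + 2 - j ≤ d →
    (X ⟨j, by omega⟩ - X 0 ^ (n + 3 - j) * X ⟨n + 3, by omega⟩ :
      MvPolynomial (Fin (n + 4)) ℂ) ∈ minId n := by
  intro d
  induction d with
  | zero =>
      intro j h3 hj hd
      have hjn : j = n + 2 := by omega
      subst hjn
      have := step_mem n (n + 2) (by omega) le_rfl
      have he : n + 3 - (n + 2) = 1 := by omega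
      rw [he, pow_one]
      exact this
  | succ d ih =>
      intro j h3 hj hd
      by_cases hcase : j = n + 2
      · subst hcase
        have := step_mem n (n + 2) (by omega) le_rfl
        have he : n + 3 - (n + 2) = 1 := by omega
        rw [he, pow_one]
        exact this
      · have h1 := step_mem n j h3 hj
        have h2 := ih (j + 1) (by omega) (by omega) (by omega)
        have he : n + 3 - j = (n + 3 - (j + 1)) + 1 := by omega
        have := (minId n).add_mem h1 ((minId n).mul_mem_left (X 0) h2)
        convert this using 1
        rw [he, pow_succ]
        ring

lemma gen_mem (n : ℕ) (i : Fin (n + 4)) :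
    X i - rename (emb1 n) (theta1 n (X i)) ∈ minId n := by
  rw [theta1, aeval_X]
  split_ifs with h1 h2
  · -- i ≤ 2
    have : rename (emb1 n) (X (⟨(i : ℕ), by omega⟩ : Fin 4)) = (X i : MvPolynomial (Fin (n + 4)) ℂ) := by
      rw [rename_X]
      congr 1
      have hv : (i : ℕ) = 0 ∨ (i : ℕ) = 1 ∨ (i : ℕ) = 2 := by omega
      rcases hv with hv | hv | hv <;>
        · ext
          simp only [emb1, hv]
          simp [Fin.val_two]
          try omega
    rw [this]; simp
  · -- i = n + 3
    have : rename (emb1 n) (X (3 : Fin 4)) = (X i : MvPolynomial (Fin (n + 4)) ℂ) := by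
      rw [rename_X]
      congr 1
      ext; simp [emb1]; omega
    rw [this]; simp
  · -- 3 ≤ i ≤ n + 2
    rw [map_mul, map_pow, rename_X, rename_X]
    have e0 : emb1 n 0 = (0 : Fin (n + 4)) := by ext; simp [emb1]
    have e3 : emb1 n 3 = (⟨n + 3, by omega⟩ : Fin (n + 4)) := by ext; simp [emb1]
    rw [e0, e3]
    have hi : i = ⟨(i : ℕ), i.isLt⟩ := rfl
    rw [hi]
    exact chain_mem n (n + 2 - (i : ℕ)) (i : ℕ) (by omega) (by omega) le_rfl

lemma psi_X0 (n : ℕ) : chartHom1 n (X 0) = Ideal.Quotient.mk _ (X 0) := by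
  rw [chartHom1, aeval_X]; norm_num

lemma psi_X1 (n : ℕ) : chartHom1 n (X 1) = Ideal.Quotient.mk _ (X 1) := by
  rw [chartHom1, aeval_X]; norm_num

lemma psi_X2 (n : ℕ) : chartHom1 n (X 2) = Ideal.Quotient.mk _ (X 2) := by
  rw [chartHom1, aeval_X]; norm_num [Fin.val_two]
  congr 1

lemma psi_X_mid (n j : ℕ) (h3 : 3 ≤ j) (hj : j ≤ n + 2) (h : j < n + 4) :
    chartHom1 n (X ⟨j, h⟩) = Ideal.Quotient.mk _ (X 0 ^ (n + 3 - j) * X 3) := by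
  rw [chartHom1, aeval_X]
  have c1 : ¬ (((⟨j, h⟩ : Fin (n + 4)) : ℕ) ≤ 2) := by simp; omega
  have c2 : ¬ ((((⟨j, h⟩ : Fin (n + 4)) : ℕ)) = n + 3) := by simp; omega
  rw [dif_neg c1, if_neg c2]

lemma psi_X_top (n : ℕ) (h : n + 3 < n + 4) :
    chartHom1 n (X ⟨n + 3, h⟩) = Ideal.Quotient.mk _ (X 3) := by
  rw [chartHom1, aeval_X]
  have c1 : ¬ (((⟨n + 3, h⟩ : Fin (n + 4)) : ℕ) ≤ 2) := by simp
  rw [dif_neg c1, if_pos rfl]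

lemma psi_row (n : ℕ) (k : Fin (n + 2)) :
    chartHom1 n (ch1Row1 n k) = chartHom1 n (X 0) * chartHom1 n (ch1Row2 n k) := by
  obtain ⟨m, hm⟩ := k
  match m, hm with
  | 0, hm =>
      simp only [ch1Row1, ch1Row2]
      norm_num
  | 1, hm =>
      simp only [ch1Row1, ch1Row2]
      norm_num
      rw [psi_X0, psi_X1, psi_X2]
      rw [← map_mul, ← map_mul, ← map_add, Ideal.Quotient.eq, Ideal.mem_span_singleton']
      exact ⟨-1, by ring⟩
  | (m + 2), hm =>
      have h2 : (m + 2 : ℕ) ≠ 1 := by omega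
      simp only [ch1Row1, ch1Row2]
      norm_num [h2]
      by_cases hC : m + 2 + 2 = n + 3
      · simp only [show m + 2 + 2 = n + 3 from hC]
        rw [psi_X_top, psi_X_mid n (m + 2 + 1) (by omega) (by omega), psi_X0]
        rw [← map_mul]
        congr 1
        rw [show n + 3 - (m + 2 + 1) = 1 from by omega, pow_one]
      · rw [psi_X_mid n (m + 2 + 1) (by omega) (by omega),
            psi_X_mid n (m + 2 + 2) (by omega) (by omega), psi_X0]
        rw [← map_mul]
        congr 1
        rw [show n + 3 - (m + 2 + 1) = (n + 3 - (m + 2 + 2)) + 1 from by omega, pow_succ]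
        ring

theorem stmt12 (n : ℕ) (hn : 1 ≤ n) :
    Function.Surjective (chartHom1 n) ∧
    RingHom.ker (chartHom1 n) =
      Ideal.span {m | ∃ i j : Fin (n + 2),
        m = ch1Row1 n i * ch1Row2 n j - ch1Row1 n j * ch1Row2 n i} := by
  constructor
  · intro y
    obtain ⟨g, hg⟩ := Ideal.Quotient.mk_surjective y
    exact ⟨rename (emb1 n) g, by rw [chartHom1_rename]; exact hg⟩
  · apply le_antisymm
    · intro f hf
      rw [RingHom.mem_ker] at hf
      have hth : theta1 n f ∈ Ideal.span {(X 0 * X 1 * X 2 - (X 1 + X 2) : MvPolynomial (Fin 4) ℂ)} := by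
        rw [← Ideal.Quotient.eq_zero_iff_mem]
        have h := congrArg (fun φ : MvPolynomial (Fin (n + 4)) ℂ →ₐ[ℂ] chartRing1 => φ f) (chartHom1_eq n)
        simp only [AlgHom.comp_apply] at h
        rw [hf] at h
        rw [Ideal.Quotient.mkₐ_eq_mk] at h
        exact h.symm
      obtain ⟨h, hh⟩ := Ideal.mem_span_singleton'.mp hth
      have key1 : f - rename (emb1 n) (theta1 n f) ∈ minId n := by
        have hev : rename (emb1 n) (theta1 n f) =
            aeval (fun i : Fin (n + 4) => rename (emb1 n) (theta1 n (X i))) f :=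
          DFunLike.congr_fun (aeval_unique ((rename (emb1 n)).comp (theta1 n))) f
        rw [hev]
        exact sub_aeval_mem _ (minId n) (gen_mem n) f
      have key2 : rename (emb1 n) (theta1 n f) ∈ minId n := by
        rw [← hh, map_mul]
        apply (minId n).mul_mem_left
        have : rename (emb1 n) (X 0 * X 1 * X 2 - (X 1 + X 2) : MvPolynomial (Fin 4) ℂ)
            = ch1Row1 n 0 * ch1Row2 n 1 - ch1Row1 n 1 * ch1Row2 n 0 := by
          simp only [map_sub, map_add, map_mul, rename_X]
          have e0 : emb1 n 0 = (0 : Fin (n + 4)) := by ext; simp [emb1]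
          have e1 : emb1 n 1 = (1 : Fin (n + 4)) := by ext; simp [emb1]
          have e2 : emb1 n 2 = (2 : Fin (n + 4)) := by ext; simp [emb1, Fin.val_two]
          rw [e0, e1, e2]
          simp only [ch1Row1, ch1Row2]
          norm_num
          ring
        rw [this]
        exact minor_mem n 0 1
      have := (minId n).add_mem key1 key2
      simpa [minId] using this
    · rw [Ideal.span_le]
      rintro m ⟨i, j, rfl⟩
      simp only [SetLike.mem_coe, RingHom.mem_ker]
      rw [map_sub, map_mul, map_mul, psi_row n i, psi_row n j]
      ring
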